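/- Let K be a field of characteristic zero, let r ≥ 1, and let e_1 < e_2 < ⋯ < e_r be non-negative integers. Then there exist an integer N ≥ 0 and elements c_0, c_1, …, c_N of the r-th exterior power ⋀^r_K K[X] of the polynomial ring, with c_N ≠ 0, such that for every t ∈ K one has (X+t)^{e_1} ∧ (X+t)^{e_2} ∧ ⋯ ∧ (X+t)^{e_r} = Σ_{k=0}^{N} c_k t^k, and moreover the leading coefficient c_N is a nonzero scalar multiple of 1 ∧ X ∧ X^2 ∧ ⋯ ∧ X^{r−1}. (In other words, the limit as t → ∞ of the r-dimensional subspace of K[X] spanned by the polynomials (X+t)^{e_i} is the space of polynomials of degree less than r.) -/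

import Mathlib

open Polynomial

section aux

lemma aux_strictMono_le {r : ℕ} (g : Fin r → ℕ) (hg : StrictMono g) (i : Fin r) :
    (i : ℕ) ≤ g i := by
  have key : ∀ n (hn : n < r), n ≤ g ⟨n, hn⟩ := by
    intro n
    induction n with
    | zero => intro hn; exact Nat.zero_le _
    | succ m ih =>
      intro hn
      have hm : m < r := lt_trans (Nat.lt_succ_self m) hn
      have h1 := hg (show (⟨m, hm⟩ : Fin r) < ⟨m + 1, hn⟩ from by simp [Fin.lt_def])
      have h2 := ih hm
      omega
  have := key (i : ℕ) i.isLt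
  simpa using this

lemma aux_sum_le {r : ℕ} (p : Fin r → ℕ) (hp : Function.Injective p) :
    ∑ i : Fin r, (i : ℕ) ≤ ∑ i : Fin r, p i := by
  classical
  set s : Finset ℕ := Finset.image p Finset.univ
  have hcard : s.card = r := by
    rw [Finset.card_image_of_injective _ hp, Finset.card_univ, Fintype.card_fin]
  have hsum : ∑ i : Fin r, p i = ∑ x ∈ s, x :=
    (Finset.sum_image (g := p) (f := fun x => x) (fun a _ b _ h => hp h)).symm
  have key : ∑ x ∈ s, x = ∑ i : Fin r, ((s.orderIsoOfFin hcard i : ℕ)) := by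
    rw [← Finset.sum_attach s (fun x => x)]
    exact (Fintype.sum_equiv (s.orderIsoOfFin hcard).toEquiv _ _ (fun i => rfl)).symm
  have hmono : StrictMono (fun i : Fin r => ((s.orderIsoOfFin hcard i : ℕ))) := by
    intro a b hab
    exact_mod_cast (s.orderIsoOfFin hcard).strictMono hab
  rw [hsum, key]
  exact Finset.sum_le_sum fun i _ => aux_strictMono_le _ hmono i

lemma aux_eq_case {r : ℕ} (p : Fin r → ℕ) (hp : Function.Injective p)
    (hsum : ∑ i : Fin r, p i = ∑ i : Fin r, (i : ℕ)) (i : Fin r) : p i < r := by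
  classical
  set s : Finset ℕ := Finset.image p Finset.univ with hs
  have hcard : s.card = r := by
    rw [Finset.card_image_of_injective _ hp, Finset.card_univ, Fintype.card_fin]
  set g : Fin r → ℕ := fun i => ((s.orderIsoOfFin hcard i : ℕ)) with hgdef
  have hmono : StrictMono g := by
    intro a b hab
    exact_mod_cast (s.orderIsoOfFin hcard).strictMono hab
  have hsum2 : ∑ i : Fin r, p i = ∑ i : Fin r, g i := by
    rw [show ∑ i : Fin r, p i = ∑ x ∈ s, x from
      (Finset.sum_image (g := p) (f := fun x => x) (fun a _ b _ h => hp h)).symm]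
    rw [← Finset.sum_attach s (fun x => x)]
    exact (Fintype.sum_equiv (s.orderIsoOfFin hcard).toEquiv _ _ (fun i => rfl)).symm
  have hle : ∀ j : Fin r, (j : ℕ) ≤ g j := aux_strictMono_le g hmono
  have heq : ∀ j : Fin r, g j = (j : ℕ) := by
    intro j
    by_contra hne
    have hlt : (j : ℕ) < g j := lt_of_le_of_ne (hle j) (Ne.symm hne)
    have : ∑ i : Fin r, (i : ℕ) < ∑ i : Fin r, g i :=
      Finset.sum_lt_sum (fun i _ => hle i) ⟨j, Finset.mem_univ j, hlt⟩
    omega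
  have hpi : p i ∈ s := Finset.mem_image_of_mem p (Finset.mem_univ i)
  obtain ⟨j, hj⟩ := (s.orderIsoOfFin hcard).surjective ⟨p i, hpi⟩
  have : g j = p i := by rw [hgdef]; exact congrArg Subtype.val hj
  rw [← this, heq j]
  exact j.isLt

lemma aux_det_choose_ne_zero (r : ℕ) (e : Fin r → ℕ) (he : StrictMono e) :
    (Matrix.of fun i j : Fin r => ((e i).choose (j : ℕ) : ℚ)).det ≠ 0 := by
  set B : Matrix (Fin r) (Fin r) ℚ := Matrix.of fun i j => ((e i).choose (j : ℕ) : ℚ)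
  set V : Matrix (Fin r) (Fin r) ℚ := Matrix.vandermonde fun i => (e i : ℚ)
  set A : Matrix (Fin r) (Fin r) ℚ :=
    Matrix.of fun k j : Fin r => (descPochhammer ℚ (j : ℕ)).coeff (k : ℕ) / (Nat.factorial (j : ℕ) : ℚ)
  have hBVA : B = V * A := by
    ext i j
    simp only [B, V, A, Matrix.mul_apply, Matrix.of_apply, Matrix.vandermonde_apply]
    have hdeg : (descPochhammer ℚ (j : ℕ)).natDegree < r :=
      lt_of_le_of_lt (le_of_eq (descPochhammer_natDegree (R := ℚ) (j : ℕ))) j.isLt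
    have heval : (descPochhammer ℚ (j : ℕ)).eval ((e i : ℚ)) =
        ∑ k : Fin r, (e i : ℚ) ^ (k : ℕ) * (descPochhammer ℚ (j : ℕ)).coeff (k : ℕ) := by
      rw [Polynomial.eval_eq_sum_range' hdeg, Fin.sum_univ_eq_sum_range
        (fun k => (e i : ℚ) ^ k * (descPochhammer ℚ (j : ℕ)).coeff k)]
      exact Finset.sum_congr rfl fun k _ => mul_comm _ _
    have hchoose : ((e i).choose (j : ℕ) : ℚ) =
        (descPochhammer ℚ (j : ℕ)).eval ((e i : ℚ)) / (Nat.factorial (j : ℕ) : ℚ) := by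
      rw [descPochhammer_eval_eq_descFactorial, Nat.descFactorial_eq_factorial_mul_choose]
      push_cast
      field_simp
    rw [hchoose, heval, Finset.sum_div]
    exact Finset.sum_congr rfl fun k _ => (mul_div_assoc _ _ _)
  have hA : A.det ≠ 0 := by
    have htri : A.BlockTriangular id := by
      intro k j h
      simp only [id] at h
      have : (descPochhammer ℚ (j : ℕ)).coeff (k : ℕ) = 0 :=
        Polynomial.coeff_eq_zero_of_natDegree_lt
          (by rw [descPochhammer_natDegree]; exact_mod_cast h)
      simp [A, this]
    rw [Matrix.det_of_upperTriangular htri]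
    apply Finset.prod_ne_zero_iff.2
    intro j _
    have : (descPochhammer ℚ (j : ℕ)).coeff (j : ℕ) = 1 := by
      have := monic_descPochhammer ℚ (j : ℕ)
      rw [Polynomial.Monic, Polynomial.leadingCoeff, descPochhammer_natDegree] at this
      exact this
    simp only [A, Matrix.of_apply, this]
    positivity
  have hV : V.det ≠ 0 := by
    rw [Matrix.det_vandermonde]
    apply Finset.prod_ne_zero_iff.2
    intro i _
    apply Finset.prod_ne_zero_iff.2
    intro j hj
    rw [Finset.mem_Ioi] at hj
    have : e i < e j := he hj
    have : (e i : ℚ) < (e j : ℚ) := by exact_mod_cast this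
    exact sub_ne_zero.2 (ne_of_gt this)
  rw [hBVA, Matrix.det_mul]
  exact mul_ne_zero hV hA

lemma aux_omega_ne_zero (K : Type*) [Field K] (r : ℕ) :
    ExteriorAlgebra.ιMulti K r (fun i : Fin r => ((X : K[X]) ^ (i : ℕ))) ≠ 0 := by
  set T : K[X] →ₗ[K] (Fin r → K) :=
    { toFun := fun p => fun j => p.coeff (j : ℕ)
      map_add' := by intro p q; funext j; simp
      map_smul' := by intro a p; funext j; simp }
  set b : Module.Basis (Fin r) K (Fin r → K) := Pi.basisFun K (Fin r)
  set g : K[X] [⋀^Fin r]→ₗ[K] K := b.det.compLinearMap T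
  set F : ExteriorAlgebra K K[X] →ₗ[K] K :=
    ExteriorAlgebra.liftAlternating (Function.update (fun n => (0 : K[X] [⋀^Fin n]→ₗ[K] K)) r g)
  intro h
  have hF : F (ExteriorAlgebra.ιMulti K r (fun i : Fin r => ((X : K[X]) ^ (i : ℕ)))) =
      g (fun i : Fin r => ((X : K[X]) ^ (i : ℕ))) := by
    rw [ExteriorAlgebra.liftAlternating_apply_ιMulti, Function.update_self]
  have hg : g (fun i : Fin r => ((X : K[X]) ^ (i : ℕ))) = 1 := by
    have hTb : (fun i : Fin r => T ((X : K[X]) ^ (i : ℕ))) = ⇑b := by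
      funext i
      funext j
      simp only [T, LinearMap.coe_mk, AddHom.coe_mk, Polynomial.coeff_X_pow, b,
        Pi.basisFun_apply]
      by_cases hij : i = j
      · subst hij; simp
      · have : ¬ ((j : ℕ) = (i : ℕ)) := fun hc => hij (Fin.ext hc).symm
        simp [this, Pi.single_apply, hij]
    simp only [g, AlternatingMap.compLinearMap_apply]
    show b.det (fun i => T ((X : K[X]) ^ (i : ℕ))) = 1
    rw [hTb, Module.Basis.det_self]
  rw [h, map_zero] at hF
  rw [hg] at hF
  exact one_ne_zero hF.symm

end aux

theorem limit_of_shifted_powers_charZero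
    (K : Type*) [Field K] [CharZero K] (r : ℕ) (hr : 1 ≤ r)
    (e : Fin r → ℕ) (he : StrictMono e) :
    ∃ (N : ℕ) (c : ℕ → ExteriorAlgebra K (Polynomial K)),
      c N ≠ 0 ∧
      (∀ t : K,
        (List.ofFn fun i : Fin r =>
            ExteriorAlgebra.ι K (((X : K[X]) + C t) ^ (e i))).prod
          = ∑ k ∈ Finset.range (N + 1), t ^ k • c k) ∧
      ∃ u : K, u ≠ 0 ∧
        c N = u • (List.ofFn fun i : Fin r =>
            ExteriorAlgebra.ι K ((X : K[X]) ^ (i : ℕ))).prod := by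
  classical
  set w : K[X] [⋀^Fin r]→ₗ[K] ExteriorAlgebra K K[X] := ExteriorAlgebra.ιMulti K r with hw
  set ω : ExteriorAlgebra K K[X] := w (fun i : Fin r => (X : K[X]) ^ (i : ℕ)) with hω
  set N : ℕ := (∑ i : Fin r, e i) - (∑ i : Fin r, (i : ℕ)) with hNdef
  set P : Finset (Fin r → ℕ) := Fintype.piFinset (fun i : Fin r => Finset.range (e i + 1))
    with hPdef
  set D : (Fin r → ℕ) → ℕ := fun p => ∑ i : Fin r, (e i - p i) with hDdef
  set W : (Fin r → ℕ) → ExteriorAlgebra K K[X] :=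
    fun p => w (fun i => (X : K[X]) ^ (p i)) with hWdef
  set c : ℕ → ExteriorAlgebra K K[X] := fun k =>
    ∑ p ∈ P.filter (fun p => D p = k),
      (∏ i : Fin r, ((e i).choose (p i) : K)) • W p with hcdef
  have hmemP : ∀ p ∈ P, ∀ i, p i ≤ e i := by
    intro p hp i
    have := (Fintype.mem_piFinset.1 hp) i
    simpa [Nat.lt_succ_iff] using this
  have hWzero : ∀ p : Fin r → ℕ, ¬ Function.Injective p → W p = 0 := by
    intro p hpinj
    rw [Function.not_injective_iff] at hpinj
    obtain ⟨i, j, hij, hne⟩ := hpinj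
    exact AlternatingMap.map_eq_zero_of_eq w _ (by rw [hij]) hne
  have hsum_le : ∑ i : Fin r, (i : ℕ) ≤ ∑ i : Fin r, e i :=
    Finset.sum_le_sum fun i _ => aux_strictMono_le e he i
  have hD_eq : ∀ p ∈ P, D p = (∑ i : Fin r, e i) - ∑ i : Fin r, p i := by
    intro p hp
    show ∑ i : Fin r, (e i - p i) = (∑ i : Fin r, e i) - ∑ i : Fin r, p i
    exact Finset.sum_tsub_distrib Finset.univ (fun i _ => hmemP p hp i)
  have hD_le : ∀ p ∈ P, Function.Injective p → D p ≤ N := by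
    intro p hp hinj
    rw [hD_eq p hp, hNdef]
    exact Nat.sub_le_sub_left (aux_sum_le p hinj) _
  -- the multilinear expansion
  have hexp : ∀ t : K, w (fun i => ((X : K[X]) + C t) ^ (e i)) =
      ∑ p ∈ P, (∏ i : Fin r, (((e i).choose (p i) : K) * t ^ (e i - p i))) • W p := by
    intro t
    have hbin : (fun i : Fin r => ((X : K[X]) + C t) ^ (e i)) = fun i =>
        ∑ j ∈ Finset.range (e i + 1),
          (((e i).choose j : K) * t ^ (e i - j)) • (X : K[X]) ^ j := by
      funext i
      rw [add_pow]
      refine Finset.sum_congr rfl fun j hj => ?_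
      rw [Polynomial.smul_eq_C_mul, map_mul, map_pow, Polynomial.C_eq_natCast]
      ring
    rw [hbin]
    have h2 := MultilinearMap.map_sum_finset (w.toMultilinearMap)
      (fun (i : Fin r) (j : ℕ) => (((e i).choose j : K) * t ^ (e i - j)) • (X : K[X]) ^ j)
      (fun i : Fin r => Finset.range (e i + 1))
    rw [show (w fun i => ∑ j ∈ Finset.range (e i + 1),
        (((e i).choose j : K) * t ^ (e i - j)) • (X : K[X]) ^ j) =
        (w.toMultilinearMap fun i => ∑ j ∈ Finset.range (e i + 1),
        (((e i).choose j : K) * t ^ (e i - j)) • (X : K[X]) ^ j) from rfl, h2]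
    refine Finset.sum_congr rfl fun p hp => ?_
    exact MultilinearMap.map_smul_univ w.toMultilinearMap
      (fun i => ((e i).choose (p i) : K) * t ^ (e i - p i)) (fun i => (X : K[X]) ^ (p i))
  -- the polynomial identity in t
  have hmain : ∀ t : K,
      (List.ofFn fun i : Fin r =>
          ExteriorAlgebra.ι K (((X : K[X]) + C t) ^ (e i))).prod
        = ∑ k ∈ Finset.range (N + 1), t ^ k • c k := by
    intro t
    have hterm : ∀ p : Fin r → ℕ,
        (∏ i : Fin r, (((e i).choose (p i) : K) * t ^ (e i - p i))) • W p
        = t ^ (D p) • ((∏ i : Fin r, ((e i).choose (p i) : K)) • W p) := by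
      intro p
      rw [Finset.prod_mul_distrib, Finset.prod_pow_eq_pow_sum, smul_smul]
      congr 1
      simp only [hDdef]
      ring
    calc (List.ofFn fun i : Fin r =>
          ExteriorAlgebra.ι K (((X : K[X]) + C t) ^ (e i))).prod
        = w (fun i => ((X : K[X]) + C t) ^ (e i)) := (ExteriorAlgebra.ιMulti_apply _).symm
      _ = ∑ p ∈ P, (∏ i : Fin r, (((e i).choose (p i) : K) * t ^ (e i - p i))) • W p := hexp t
      _ = ∑ p ∈ P, t ^ (D p) • ((∏ i : Fin r, ((e i).choose (p i) : K)) • W p) :=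
          Finset.sum_congr rfl fun p _ => hterm p
      _ = ∑ p ∈ P.filter (fun p => D p ≤ N),
            t ^ (D p) • ((∏ i : Fin r, ((e i).choose (p i) : K)) • W p) := by
          refine (Finset.sum_filter_of_ne ?_).symm
          intro p hp hne
          by_contra hgt
          have hninj : ¬ Function.Injective p := fun hinj => hgt (hD_le p hp hinj)
          rw [hWzero p hninj, smul_zero, smul_zero] at hne
          exact hne rfl
      _ = ∑ k ∈ Finset.range (N + 1), ∑ p ∈ (P.filter (fun p => D p ≤ N)).filter
            (fun p => D p = k),
            t ^ (D p) • ((∏ i : Fin r, ((e i).choose (p i) : K)) • W p) := by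
          refine (Finset.sum_fiberwise_of_maps_to ?_ _).symm
          intro p hp
          rw [Finset.mem_filter] at hp
          exact Finset.mem_range.2 (Nat.lt_succ_of_le hp.2)
      _ = ∑ k ∈ Finset.range (N + 1), t ^ k • c k := by
          refine Finset.sum_congr rfl fun k hk => ?_
          have hkN : k ≤ N := Nat.lt_succ_iff.1 (Finset.mem_range.1 hk)
          have hfil : (P.filter (fun p => D p ≤ N)).filter (fun p => D p = k)
              = P.filter (fun p => D p = k) := by
            rw [Finset.filter_filter]
            refine Finset.filter_congr fun p _ => ?_
            constructor
            · exact fun h => h.2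
            · exact fun h => ⟨h ▸ hkN, h⟩
          rw [hfil]
          simp only [hcdef]
          rw [Finset.smul_sum]
          refine Finset.sum_congr rfl fun p hp => ?_
          rw [(Finset.mem_filter.1 hp).2]
  -- leading coefficient
  set u : K := ∑ σ : Equiv.Perm (Fin r),
    ((Equiv.Perm.sign σ : ℤ) : K) * ∏ i : Fin r, ((e i).choose ((σ i : ℕ)) : K) with hudef
  have hWperm : ∀ σ : Equiv.Perm (Fin r),
      W (fun i => ((σ i : ℕ))) = ((Equiv.Perm.sign σ : ℤ) : K) • ω := by
    intro σ
    have hcomp : (fun i : Fin r => (X : K[X]) ^ ((σ i : ℕ)))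
        = (fun i : Fin r => (X : K[X]) ^ (i : ℕ)) ∘ σ := rfl
    show w (fun i => (X : K[X]) ^ ((σ i : ℕ))) = _
    rw [hcomp, AlternatingMap.map_perm]
    rw [Units.smul_def, ← Int.cast_smul_eq_zsmul K]
  have hcN : c N = u • ω := by
    have h1 : c N = ∑ p ∈ (P.filter (fun p => D p = N)).filter
        (fun p => Function.Injective p),
        (∏ i : Fin r, ((e i).choose (p i) : K)) • W p := by
      simp only [hcdef]
      refine (Finset.sum_filter_of_ne ?_).symm
      intro p hp hne
      by_contra hninj
      rw [hWzero p hninj, smul_zero] at hne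
      exact hne rfl
    have h2 : ∑ σ ∈ Finset.univ.filter
          (fun σ : Equiv.Perm (Fin r) => ∀ i, ((σ i : ℕ)) ≤ e i),
        (∏ i : Fin r, ((e i).choose ((σ i : ℕ)) : K)) • W (fun i => ((σ i : ℕ)))
        = ∑ p ∈ (P.filter (fun p => D p = N)).filter (fun p => Function.Injective p),
        (∏ i : Fin r, ((e i).choose (p i) : K)) • W p := by
      refine Finset.sum_bij (fun σ _ => fun i => ((σ i : ℕ))) ?_ ?_ ?_ ?_
      · intro σ hσ
        rw [Finset.mem_filter] at hσ
        have hle := hσ.2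
        have hmem : (fun i => ((σ i : ℕ))) ∈ P := by
          rw [hPdef, Fintype.mem_piFinset]
          intro i
          exact Finset.mem_range.2 (Nat.lt_succ_of_le (hle i))
        have hsumσ : ∑ i : Fin r, ((σ i : ℕ)) = ∑ i : Fin r, (i : ℕ) :=
          Equiv.sum_comp σ (fun i => (i : ℕ))
        refine Finset.mem_filter.2 ⟨Finset.mem_filter.2 ⟨hmem, ?_⟩, ?_⟩
        · rw [hD_eq _ hmem, hsumσ, hNdef]
        · intro a b hab
          exact σ.injective (Fin.val_injective hab)
      · intro σ₁ h₁ σ₂ h₂ hfe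
        ext i
        have h' : ((σ₁ i : ℕ)) = ((σ₂ i : ℕ)) := congrFun hfe i
        exact h'
      · intro p hp
        rw [Finset.mem_filter, Finset.mem_filter] at hp
        obtain ⟨⟨hpP, hpD⟩, hpinj⟩ := hp
        have hple : ∑ i : Fin r, p i ≤ ∑ i : Fin r, e i :=
          Finset.sum_le_sum fun i _ => hmemP p hpP i
        have hpge : ∑ i : Fin r, (i : ℕ) ≤ ∑ i : Fin r, p i := aux_sum_le p hpinj
        have hpsum : ∑ i : Fin r, p i = ∑ i : Fin r, (i : ℕ) := by
          have h1' := hD_eq p hpP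
          rw [hpD, hNdef] at h1'
          omega
        have hplt : ∀ i, p i < r := aux_eq_case p hpinj hpsum
        set g : Fin r → Fin r := fun i => ⟨p i, hplt i⟩ with hgdef
        have hginj : Function.Injective g := by
          intro a b hab
          exact hpinj (congrArg Fin.val hab)
        have hgbij : Function.Bijective g := Finite.injective_iff_bijective.1 hginj
        refine ⟨Equiv.ofBijective g hgbij, ?_, ?_⟩
        · rw [Finset.mem_filter]
          refine ⟨Finset.mem_univ _, fun i => ?_⟩
          show ((g i : ℕ)) ≤ e i
          exact hmemP p hpP i
        · funext i
          rfl
      · intro σ hσ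
        rfl
    have h3 : ∑ σ : Equiv.Perm (Fin r),
        (∏ i : Fin r, ((e i).choose ((σ i : ℕ)) : K)) • W (fun i => ((σ i : ℕ)))
        = ∑ σ ∈ Finset.univ.filter
          (fun σ : Equiv.Perm (Fin r) => ∀ i, ((σ i : ℕ)) ≤ e i),
        (∏ i : Fin r, ((e i).choose ((σ i : ℕ)) : K)) • W (fun i => ((σ i : ℕ))) := by
      refine (Finset.sum_filter_of_ne ?_).symm
      intro σ _ hne i
      by_contra hgt
      push_neg at hgt
      have hzero : ((e i).choose ((σ i : ℕ)) : K) = 0 := by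
        rw [Nat.choose_eq_zero_of_lt hgt]
        exact Nat.cast_zero
      rw [Finset.prod_eq_zero (Finset.mem_univ i) hzero, zero_smul] at hne
      exact hne rfl
    rw [h1, ← h2, ← h3]
    rw [hudef, Finset.sum_smul]
    refine Finset.sum_congr rfl fun σ _ => ?_
    rw [hWperm σ, smul_smul]
    congr 1
    ring
  have hu : u ≠ 0 := by
    set MatK : Matrix (Fin r) (Fin r) K :=
      Matrix.of fun i j : Fin r => ((e i).choose (j : ℕ) : K) with hMatK
    have hdet : u = MatK.transpose.det := by
      rw [Matrix.det_apply', hudef]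
      refine Finset.sum_congr rfl fun σ _ => ?_
      congr 1
    have hmap : MatK = (algebraMap ℚ K).mapMatrix
        (Matrix.of fun i j : Fin r => ((e i).choose (j : ℕ) : ℚ)) := by
      ext i j
      simp [MatK]
    have hne : MatK.det ≠ 0 := by
      rw [hmap, ← RingHom.map_det]
      intro hcon
      exact aux_det_choose_ne_zero r e he ((map_eq_zero_iff _
        (algebraMap ℚ K).injective).1 hcon)
    rw [hdet, Matrix.det_transpose]
    exact hne
  refine ⟨N, c, ?_, hmain, u, hu, ?_⟩
  · rw [hcN]
    exact smul_ne_zero hu (by rw [hω, hw]; exact aux_omega_ne_zero K r)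
  · rw [hcN, hω, hw, ExteriorAlgebra.ιMulti_apply]
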